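/- arXiv:1303.2087 — 3 statements merged into one kernel-verified Lean document; each statement's English description precedes it below -/
import Mathlib

section
/- Let (U2,X1,X2) be finite-valued random variables with joint distribution p(u2,x1,x2) = p(x1) p(u2,x2) (X1 independent of (U2,X2)), and let (Y1,Y2) be the output of a DMZIC with weak interference with input (X1,X2), where U2 - (X1,X2) - (Y1,Y2) is a Markov chain. Then I(U2,X1;Y1) - I(U2;Y2) <= I(X1;Y1|U2). -/
open scoped BigOperators

noncomputable section

namespace IT

/-- A probability mass function on a finite type. -/
def IsPMF {α : Type*} [Fintype α] (p : α → ℝ) : Prop :=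
  (∀ a, 0 ≤ p a) ∧ ∑ a, p a = 1

/-- The distribution (pushforward) of a random variable `X` under the pmf `μ`
on the sample space `Ω`. -/
def distOf {Ω α : Type*} [Fintype Ω] [DecidableEq α] (μ : Ω → ℝ) (X : Ω → α) : α → ℝ :=
  fun a => ∑ ω, if X ω = a then μ ω else 0

/-- Shannon entropy (base-2 logarithms) of a pmf on a finite type.
(Recall `Real.logb 2 0 = 0`, so the `0 log 0 = 0` convention is automatic.) -/
def ent {α : Type*} [Fintype α] (p : α → ℝ) : ℝ := -∑ a, p a * Real.logb 2 (p a)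

/-- Entropy `H(X)` of a finite-valued random variable `X` on `(Ω, μ)`. -/
def H {Ω α : Type*} [Fintype Ω] [Fintype α] [DecidableEq α] (μ : Ω → ℝ) (X : Ω → α) : ℝ :=
  ent (distOf μ X)

/-- Mutual information `I(X;Y)`. -/
def MI {Ω α β : Type*} [Fintype Ω] [Fintype α] [DecidableEq α] [Fintype β] [DecidableEq β]
    (μ : Ω → ℝ) (X : Ω → α) (Y : Ω → β) : ℝ :=
  H μ X + H μ Y - H μ (fun ω => (X ω, Y ω))

/-- Conditional mutual information `I(X;Y|Z)`. -/
def CMI {Ω α β γ : Type*} [Fintype Ω] [Fintype α] [DecidableEq α] [Fintype β] [DecidableEq β]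
    [Fintype γ] [DecidableEq γ] (μ : Ω → ℝ) (X : Ω → α) (Y : Ω → β) (Z : Ω → γ) : ℝ :=
  H μ (fun ω => (X ω, Z ω)) + H μ (fun ω => (Y ω, Z ω))
    - H μ (fun ω => (X ω, Y ω, Z ω)) - H μ Z

/-- `B` is conditionally independent of `A` given `C` (a Markov chain `A - C - B`). -/
def CondIndep {Ω α β γ : Type*} [Fintype Ω] [DecidableEq α] [DecidableEq β] [DecidableEq γ]
    (μ : Ω → ℝ) (A : Ω → α) (B : Ω → β) (C : Ω → γ) : Prop :=
  ∀ a b c,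
    distOf μ (fun ω => (A ω, B ω, C ω)) (a, b, c) * distOf μ C c =
      distOf μ (fun ω => (A ω, C ω)) (a, c) * distOf μ (fun ω => (B ω, C ω)) (b, c)

variable {A1 A2 B1 B2 : Type*}

/-- A discrete memoryless interference channel with input alphabets `A1, A2` and
output alphabets `B1, B2`: every pair of inputs yields a pmf on output pairs. -/
def IsChannel [Fintype B1] [Fintype B2] (W : A1 → A2 → B1 × B2 → ℝ) : Prop :=
  ∀ x1 x2, IsPMF (W x1 x2)

/-- DMZIC with weak interference: the transition probability factorizes as
`p(y1,y2|x1,x2) = p(y2|x2) q(y1|x1,y2)`, i.e. one-sided interference together with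
the Markov chain `X2 - (X1,Y2) - Y1`. -/
def WeakZ [Fintype B1] [Fintype B2] (W : A1 → A2 → B1 × B2 → ℝ) : Prop :=
  ∃ (p2 : A2 → B2 → ℝ) (q : A1 → B2 → B1 → ℝ),
    (∀ x2, IsPMF (p2 x2)) ∧ (∀ x1 y2, IsPMF (q x1 y2)) ∧
      ∀ x1 x2 y1 y2, W x1 x2 (y1, y2) = p2 x2 y2 * q x1 y2 y1

/-- Factorization `p(y1,y2|x1,x2) = p(y2|x1,x2) q(y1|x1,y2)`, i.e. the Markov chain
`X2 - (X1,Y2) - Y1`. -/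
def ChainX2X1Y2Y1 [Fintype B1] [Fintype B2] (W : A1 → A2 → B1 × B2 → ℝ) : Prop :=
  ∃ (pa : A1 → A2 → B2 → ℝ) (q : A1 → B2 → B1 → ℝ),
    (∀ x1 x2, IsPMF (pa x1 x2)) ∧ (∀ x1 y2, IsPMF (q x1 y2)) ∧
      ∀ x1 x2 y1 y2, W x1 x2 (y1, y2) = pa x1 x2 y2 * q x1 y2 y1

/-- The `n`-fold memoryless extension of the channel `W`. -/
def nFold (W : A1 → A2 → B1 × B2 → ℝ) (n : ℕ) (a : Fin n → A1) (b : Fin n → A2)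
    (y : (Fin n → B1) × (Fin n → B2)) : ℝ :=
  ∏ i, W (a i) (b i) (y.1 i, y.2 i)

/-- An `(n, M1, M2)` code for the interference channel. -/
structure Code (A1 A2 B1 B2 : Type*) (n M1 M2 : ℕ) where
  enc1 : Fin M1 → Fin n → A1
  enc2 : Fin M2 → Fin n → A2
  dec1 : (Fin n → B1) → Fin M1
  dec2 : (Fin n → B2) → Fin M2

/-- Average probability of error at receiver 1 (messages uniform and independent). -/
def err1 [Fintype B1] [Fintype B2] (W : A1 → A2 → B1 × B2 → ℝ) {n M1 M2 : ℕ}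
    (c : Code A1 A2 B1 B2 n M1 M2) : ℝ :=
  ((M1 : ℝ) * (M2 : ℝ))⁻¹ *
    ∑ w1 : Fin M1, ∑ w2 : Fin M2, ∑ y : (Fin n → B1) × (Fin n → B2),
      if c.dec1 y.1 ≠ w1 then nFold W n (c.enc1 w1) (c.enc2 w2) y else 0

/-- Average probability of error at receiver 2 (messages uniform and independent). -/
def err2 [Fintype B1] [Fintype B2] (W : A1 → A2 → B1 × B2 → ℝ) {n M1 M2 : ℕ}
    (c : Code A1 A2 B1 B2 n M1 M2) : ℝ :=
  ((M1 : ℝ) * (M2 : ℝ))⁻¹ *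
    ∑ w1 : Fin M1, ∑ w2 : Fin M2, ∑ y : (Fin n → B1) × (Fin n → B2),
      if c.dec2 y.2 ≠ w2 then nFold W n (c.enc1 w1) (c.enc2 w2) y else 0

/-- A (nonnegative) rate pair `(R1, R2)` is achievable if there are codes of blocklength `n`,
with at least `2 ^ (n R1)` and `2 ^ (n R2)` messages, whose average error probabilities at
the two receivers can be made arbitrarily small. -/
def Achievable [Fintype B1] [Fintype B2] (W : A1 → A2 → B1 × B2 → ℝ) (R1 R2 : ℝ) : Prop :=
  0 ≤ R1 ∧ 0 ≤ R2 ∧ ∀ ε : ℝ, 0 < ε →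
    ∃ (n M1 M2 : ℕ) (c : Code A1 A2 B1 B2 n M1 M2), 0 < n ∧
      (2 : ℝ) ^ ((n : ℝ) * R1) ≤ (M1 : ℝ) ∧ (2 : ℝ) ^ ((n : ℝ) * R2) ≤ (M2 : ℝ) ∧
      err1 W c ≤ ε ∧ err2 W c ≤ ε

/-- The sum-rate capacity: the supremum of `R1 + R2` over achievable rate pairs. -/
def sumCapacity [Fintype B1] [Fintype B2] (W : A1 → A2 → B1 × B2 → ℝ) : ℝ :=
  sSup {r : ℝ | ∃ R1 R2 : ℝ, Achievable W R1 R2 ∧ r = R1 + R2}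

/-- The capacity region: the closure of the set of achievable rate pairs. -/
def capacityRegion [Fintype B1] [Fintype B2] (W : A1 → A2 → B1 × B2 → ℝ) : Set (ℝ × ℝ) :=
  closure {p : ℝ × ℝ | Achievable W p.1 p.2}

/-- The joint pmf of `(X1, X2, Y1, Y2)` when the product input `p1 × p2` is fed to `W`. -/
def jointOf (W : A1 → A2 → B1 × B2 → ℝ) (p1 : A1 → ℝ) (p2 : A2 → ℝ) :
    A1 × A2 × B1 × B2 → ℝ :=
  fun z => p1 z.1 * p2 z.2.1 * W z.1 z.2.1 (z.2.2.1, z.2.2.2)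

/-- Coordinate projections on `A1 × A2 × B1 × B2`. -/
def pX1 : A1 × A2 × B1 × B2 → A1 := fun z => z.1
def pX2 : A1 × A2 × B1 × B2 → A2 := fun z => z.2.1
def pY1 : A1 × A2 × B1 × B2 → B1 := fun z => z.2.2.1
def pY2 : A1 × A2 × B1 × B2 → B2 := fun z => z.2.2.2

/-- The binary entropy function (base-2 logarithms). -/
def h2 (t : ℝ) : ℝ := -(t * Real.logb 2 t) - (1 - t) * Real.logb 2 (1 - t)

end IT

namespace IT

set_option linter.unusedSectionVars false

section Helpers
variable {Ω α β γ δ : Type*} [Fintype Ω]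

lemma distOf_nonneg [DecidableEq α] {μ : Ω → ℝ} (hμ : ∀ ω, 0 ≤ μ ω) (X : Ω → α) (a : α) :
    0 ≤ distOf μ X a :=
  Finset.sum_nonneg fun ω _ => by split <;> simp [hμ ω]

lemma H_comp [Fintype α] [Fintype β] [DecidableEq α] [DecidableEq β]
    (μ : Ω → ℝ) (X : Ω → α) (σ : α → β) (hσ : Function.Injective σ) :
    H μ (fun ω => σ (X ω)) = H μ X := by
  unfold H ent
  congr 1
  have key : ∀ a, distOf μ (fun ω => σ (X ω)) (σ a) = distOf μ X a := by
    intro a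
    exact Finset.sum_congr rfl fun ω _ => by simp [hσ.eq_iff]
  rw [← Finset.sum_subset (Finset.subset_univ ((Finset.univ : Finset α).image σ))
      (fun b _ hb => ?_)]
  · rw [Finset.sum_image (fun a _ b _ h => hσ h)]
    exact Finset.sum_congr rfl fun a _ => by rw [key]
  · have : distOf μ (fun ω => σ (X ω)) b = 0 := by
      refine Finset.sum_eq_zero fun ω _ => ?_
      have : σ (X ω) ≠ b := fun h => hb (Finset.mem_image.2 ⟨X ω, Finset.mem_univ _, h⟩)
      simp [this]
    simp [this]

-- marginal lemmas
lemma distOf_marg_mid [Fintype α] [Fintype β] [Fintype γ] [DecidableEq α] [DecidableEq β]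
    [DecidableEq γ] (μ : Ω → ℝ) (X : Ω → α) (Y : Ω → β) (Z : Ω → γ) (a : α) (c : γ) :
    distOf μ (fun ω => (X ω, Z ω)) (a, c)
      = ∑ b, distOf μ (fun ω => (X ω, Y ω, Z ω)) (a, b, c) := by
  unfold distOf
  rw [Finset.sum_comm]
  refine Finset.sum_congr rfl fun ω _ => ?_
  have h : ∀ b, (if (X ω, Y ω, Z ω) = (a, b, c) then μ ω else 0)
      = if Y ω = b then (if (X ω, Z ω) = (a, c) then μ ω else 0) else 0 := by
    intro b
    by_cases h1 : Y ω = b <;> by_cases h2 : (X ω, Z ω) = (a, c) <;>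
      simp_all [Prod.ext_iff]
  simp_rw [h, Finset.sum_ite_eq, Finset.mem_univ, if_true]

variable [Fintype α] [Fintype β] [Fintype γ] [DecidableEq α] [DecidableEq β] [DecidableEq γ]

lemma distOf_marg_last (μ : Ω → ℝ) (X : Ω → α) (Y : Ω → β) (Z : Ω → γ) (a : α) (b : β) :
    distOf μ (fun ω => (X ω, Y ω)) (a, b)
      = ∑ c, distOf μ (fun ω => (X ω, Y ω, Z ω)) (a, b, c) := by
  unfold distOf
  rw [Finset.sum_comm]
  refine Finset.sum_congr rfl fun ω _ => ?_
  have h : ∀ c, (if (X ω, Y ω, Z ω) = (a, b, c) then μ ω else 0)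
      = if Z ω = c then (if (X ω, Y ω) = (a, b) then μ ω else 0) else 0 := by
    intro c
    by_cases h1 : Z ω = c <;> by_cases h2 : (X ω, Y ω) = (a, b) <;> simp_all [Prod.ext_iff]
  simp_rw [h, Finset.sum_ite_eq, Finset.mem_univ, if_true]

lemma distOf_marg_fst (μ : Ω → ℝ) (X : Ω → α) (Y : Ω → β) (Z : Ω → γ) (b : β) (c : γ) :
    distOf μ (fun ω => (Y ω, Z ω)) (b, c)
      = ∑ a, distOf μ (fun ω => (X ω, Y ω, Z ω)) (a, b, c) := by
  unfold distOf
  rw [Finset.sum_comm]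
  refine Finset.sum_congr rfl fun ω _ => ?_
  have h : ∀ a, (if (X ω, Y ω, Z ω) = (a, b, c) then μ ω else 0)
      = if X ω = a then (if (Y ω, Z ω) = (b, c) then μ ω else 0) else 0 := by
    intro a
    by_cases h1 : X ω = a <;> by_cases h2 : (Y ω, Z ω) = (b, c) <;> simp_all [Prod.ext_iff]
  simp_rw [h, Finset.sum_ite_eq, Finset.mem_univ, if_true]

lemma distOf_marg_pair_fst (μ : Ω → ℝ) (Y : Ω → β) (Z : Ω → γ) (c : γ) :
    distOf μ Z c = ∑ b, distOf μ (fun ω => (Y ω, Z ω)) (b, c) := by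
  unfold distOf
  rw [Finset.sum_comm]
  refine Finset.sum_congr rfl fun ω _ => ?_
  have h : ∀ b, (if (Y ω, Z ω) = (b, c) then μ ω else 0)
      = if Y ω = b then (if Z ω = c then μ ω else 0) else 0 := by
    intro b
    by_cases h1 : Y ω = b <;> by_cases h2 : Z ω = c <;> simp_all [Prod.ext_iff]
  simp_rw [h, Finset.sum_ite_eq, Finset.mem_univ, if_true]

lemma distOf_marg_pair_snd (μ : Ω → ℝ) (Y : Ω → β) (Z : Ω → γ) (b : β) :
    distOf μ Y b = ∑ c, distOf μ (fun ω => (Y ω, Z ω)) (b, c) := by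
  unfold distOf
  rw [Finset.sum_comm]
  refine Finset.sum_congr rfl fun ω _ => ?_
  have h : ∀ c, (if (Y ω, Z ω) = (b, c) then μ ω else 0)
      = if Z ω = c then (if Y ω = b then μ ω else 0) else 0 := by
    intro c
    by_cases h1 : Z ω = c <;> by_cases h2 : Y ω = b <;> simp_all [Prod.ext_iff]
  simp_rw [h, Finset.sum_ite_eq, Finset.mem_univ, if_true]

lemma pointA {f0 g0 F0 : ℝ} (hf0 : 0 ≤ f0) (hg0 : 0 ≤ g0) (hF0 : f0 ≤ F0) :
    f0 * g0 * Real.logb 2 (F0 * g0) - f0 * g0 * Real.logb 2 (f0 * g0)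
      = f0 * g0 * (Real.logb 2 F0 - Real.logb 2 f0) := by
  rcases eq_or_lt_of_le hf0 with h | h
  · simp [← h]
  rcases eq_or_lt_of_le hg0 with h2 | h2
  · simp [← h2]
  have hF : 0 < F0 := lt_of_lt_of_le h hF0
  rw [Real.logb_mul h.ne' h2.ne', Real.logb_mul hF.ne' h2.ne']
  ring

lemma pointB {a b c d : ℝ} (ha : 0 ≤ a) (hb : 0 ≤ b) (hc : 0 ≤ c)
    (hab : a ≤ b) (hac : a ≤ c) (hbd : b ≤ d) :
    a * Real.logb 2 (c) - a * Real.logb 2 a - (a * Real.logb 2 d - a * Real.logb 2 b)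
      ≤ (if 0 < d then b * c / d - a else 0) / Real.log 2 := by
  have hlog2 : (0:ℝ) < Real.log 2 := Real.log_pos (by norm_num)
  rcases eq_or_lt_of_le ha with h | h
  · rw [← h]
    simp only [zero_mul, sub_zero, sub_self]
    split_ifs with hd
    · positivity
    · simp
  · have hb' : 0 < b := lt_of_lt_of_le h hab
    have hc' : 0 < c := lt_of_lt_of_le h hac
    have hd' : 0 < d := lt_of_lt_of_le hb' hbd
    rw [if_pos hd']
    have key : Real.log (b * c / (d * a)) =
        Real.log b + Real.log c - Real.log d - Real.log a := by
      rw [Real.log_div (by positivity) (by positivity),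
        Real.log_mul hb'.ne' hc'.ne', Real.log_mul hd'.ne' h.ne']
      ring
    have bound : a * Real.log (b * c / (d * a)) ≤ b * c / d - a := by
      have h1 := Real.log_le_sub_one_of_pos (show (0:ℝ) < b * c / (d * a) by positivity)
      have h2 : a * Real.log (b * c / (d * a)) ≤ a * (b * c / (d * a) - 1) := by
        exact mul_le_mul_of_nonneg_left h1 ha
      have h3 : a * (b * c / (d * a) - 1) = b * c / d - a := by
        field_simp
      linarith
    have lhs_eq : a * Real.logb 2 c - a * Real.logb 2 a
        - (a * Real.logb 2 d - a * Real.logb 2 b)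
        = (a * Real.log (b * c / (d * a))) / Real.log 2 := by
      simp only [Real.logb, key]
      ring
    rw [lhs_eq]
    exact (div_le_div_iff_of_pos_right hlog2).mpr bound

lemma core {U B1 B2 : Type*} [Fintype U] [Fintype B1] [Fintype B2]
    (p : U × B1 × B2 → ℝ) (p2 : U × B2 → ℝ) (p1 : U × B1 → ℝ)
    (p12 : B1 × B2 → ℝ) (q1 : B1 → ℝ) (q2 : B2 → ℝ)
    (f : U → B2 → ℝ) (g : B1 → B2 → ℝ)
    (hf : ∀ u y2, 0 ≤ f u y2) (hg : ∀ y1 y2, 0 ≤ g y1 y2)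
    (hfac : ∀ u y1 y2, p (u, y1, y2) = f u y2 * g y1 y2)
    (hp2 : ∀ u y2, p2 (u, y2) = ∑ y1, p (u, y1, y2))
    (hp1 : ∀ u y1, p1 (u, y1) = ∑ y2, p (u, y1, y2))
    (hp12 : ∀ y1 y2, p12 (y1, y2) = ∑ u, p (u, y1, y2))
    (hq1 : ∀ y1, q1 y1 = ∑ u, ∑ y2, p (u, y1, y2))
    (hq2 : ∀ y2, q2 y2 = ∑ u, ∑ y1, p (u, y1, y2)) :
    ent p2 - ent q2 ≤ ent p1 - ent q1 := by
  classical
  set F : B2 → ℝ := fun y2 => ∑ u, f u y2 with hF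
  set G : B2 → ℝ := fun y2 => ∑ y1, g y1 y2 with hG
  have hp_nn : ∀ u y1 y2, 0 ≤ p (u, y1, y2) := fun u y1 y2 => by
    rw [hfac]; exact mul_nonneg (hf u y2) (hg y1 y2)
  have hG_nn : ∀ y2, 0 ≤ G y2 := fun y2 => Finset.sum_nonneg fun y1 _ => hg y1 y2
  have hfF : ∀ u y2, f u y2 ≤ F y2 := fun u y2 =>
    Finset.single_le_sum (f := fun u => f u y2) (fun i _ => hf i y2) (Finset.mem_univ u)
  have hp2' : ∀ u y2, p2 (u, y2) = f u y2 * G y2 := by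
    intro u y2; rw [hp2]; simp_rw [hfac]; rw [hG, ← Finset.mul_sum]
  have hp12' : ∀ y1 y2, p12 (y1, y2) = F y2 * g y1 y2 := by
    intro y1 y2; rw [hp12]; simp_rw [hfac]; rw [hF, ← Finset.sum_mul]
  have hq2'' : ∀ y2, ∑ u, p2 (u, y2) = q2 y2 := by
    intro y2; simp_rw [hp2]; rw [hq2]
  have hq2' : ∀ y2, q2 y2 = F y2 * G y2 := by
    intro y2; rw [← hq2'']; simp_rw [hp2', hF]; rw [← Finset.sum_mul]
  have hq1'' : ∀ y1, ∑ u, p1 (u, y1) = q1 y1 := by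
    intro y1; simp_rw [hp1]; rw [hq1]
  have hq1y2 : ∀ y1, ∑ y2, p12 (y1, y2) = q1 y1 := by
    intro y1; simp_rw [hp12]; rw [hq1, Finset.sum_comm]
  have hp1_nn : ∀ u y1, 0 ≤ p1 (u, y1) := fun u y1 => by
    rw [hp1]; exact Finset.sum_nonneg fun y2 _ => hp_nn u y1 y2
  have hp12_nn : ∀ y1 y2, 0 ≤ p12 (y1, y2) := fun y1 y2 => by
    rw [hp12]; exact Finset.sum_nonneg fun u _ => hp_nn u y1 y2
  have hp_le_p1 : ∀ u y1 y2, p (u, y1, y2) ≤ p1 (u, y1) := fun u y1 y2 => by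
    rw [hp1]
    exact Finset.single_le_sum (f := fun y2 => p (u, y1, y2)) (fun i _ => hp_nn u y1 i)
      (Finset.mem_univ y2)
  have hp_le_p12 : ∀ u y1 y2, p (u, y1, y2) ≤ p12 (y1, y2) := fun u y1 y2 => by
    rw [hp12]
    exact Finset.single_le_sum (f := fun u => p (u, y1, y2)) (fun i _ => hp_nn i y1 y2)
      (Finset.mem_univ u)
  have hp1_le_q1 : ∀ u y1, p1 (u, y1) ≤ q1 y1 := fun u y1 => by
    rw [← hq1'']
    exact Finset.single_le_sum (f := fun u => p1 (u, y1)) (fun i _ => hp1_nn i y1)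
      (Finset.mem_univ u)
  -- step 1
  have step1 : ent p2 - ent q2 = ∑ u, ∑ y1, ∑ y2,
      (p (u, y1, y2) * Real.logb 2 (p12 (y1, y2))
        - p (u, y1, y2) * Real.logb 2 (p (u, y1, y2))) := by
    have inner : ∀ u y2, ∑ y1, (p (u, y1, y2) * Real.logb 2 (p12 (y1, y2))
        - p (u, y1, y2) * Real.logb 2 (p (u, y1, y2)))
        = p2 (u, y2) * Real.logb 2 (q2 y2) - p2 (u, y2) * Real.logb 2 (p2 (u, y2)) := by
      intro u y2
      have e : ∀ y1, p (u, y1, y2) * Real.logb 2 (p12 (y1, y2))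
          - p (u, y1, y2) * Real.logb 2 (p (u, y1, y2))
          = g y1 y2 * (f u y2 * (Real.logb 2 (F y2) - Real.logb 2 (f u y2))) := by
        intro y1
        rw [hfac, hp12']
        have hA := pointA (hf u y2) (hg y1 y2) (hfF u y2)
        rw [hA]; ring
      simp_rw [e]
      rw [← Finset.sum_mul, (rfl : (∑ i : B1, g i y2) = G y2), hp2', hq2']
      have hA := pointA (hf u y2) (hG_nn y2) (hfF u y2)
      rw [hA]; ring
    have q2exp : ∑ y2, q2 y2 * Real.logb 2 (q2 y2)
        = ∑ u, ∑ y2, p2 (u, y2) * Real.logb 2 (q2 y2) := by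
      rw [Finset.sum_comm]
      refine Finset.sum_congr rfl fun y2 _ => ?_
      rw [← Finset.sum_mul, hq2'']
    have lhs_eq : ent p2 - ent q2
        = ∑ u, ∑ y2, (p2 (u, y2) * Real.logb 2 (q2 y2)
            - p2 (u, y2) * Real.logb 2 (p2 (u, y2))) := by
      rw [ent, ent, Fintype.sum_prod_type]
      simp only [Finset.sum_sub_distrib]
      rw [← q2exp]
      ring
    rw [lhs_eq]
    refine Finset.sum_congr rfl fun u _ => ?_
    rw [Finset.sum_comm]
    exact Finset.sum_congr rfl fun y2 _ => (inner u y2).symm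
  -- step 2
  have step2 : ent p1 - ent q1 = ∑ u, ∑ y1, ∑ y2,
      (p (u, y1, y2) * Real.logb 2 (q1 y1)
        - p (u, y1, y2) * Real.logb 2 (p1 (u, y1))) := by
    have q1exp : ∑ y1, q1 y1 * Real.logb 2 (q1 y1)
        = ∑ u, ∑ y1, p1 (u, y1) * Real.logb 2 (q1 y1) := by
      rw [Finset.sum_comm]
      refine Finset.sum_congr rfl fun y1 _ => ?_
      rw [← Finset.sum_mul, hq1'']
    have lhs_eq : ent p1 - ent q1
        = ∑ u, ∑ y1, (p1 (u, y1) * Real.logb 2 (q1 y1)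
            - p1 (u, y1) * Real.logb 2 (p1 (u, y1))) := by
      rw [ent, ent, Fintype.sum_prod_type]
      simp only [Finset.sum_sub_distrib]
      rw [← q1exp]
      ring
    rw [lhs_eq]
    refine Finset.sum_congr rfl fun u _ => Finset.sum_congr rfl fun y1 _ => ?_
    rw [Finset.sum_sub_distrib, ← Finset.sum_mul, ← Finset.sum_mul, ← hp1]
  -- step 3 : the inequality between the two triple sums
  have tsum : ∑ u, ∑ y1, ∑ y2, (if 0 < q1 y1 then
      p1 (u, y1) * p12 (y1, y2) / q1 y1 - p (u, y1, y2) else 0) = 0 := by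
    rw [Finset.sum_comm]
    refine Finset.sum_eq_zero fun y1 _ => ?_
    by_cases hd : 0 < q1 y1
    · simp only [if_pos hd]
      have e1 : ∀ u, ∑ y2, (p1 (u, y1) * p12 (y1, y2) / q1 y1 - p (u, y1, y2))
          = p1 (u, y1) - ∑ y2, p (u, y1, y2) := by
        intro u
        rw [Finset.sum_sub_distrib]
        congr 1
        rw [← Finset.sum_div, ← Finset.mul_sum, hq1y2, mul_div_assoc,
          div_self hd.ne', mul_one]
      simp_rw [e1]
      rw [Finset.sum_sub_distrib]
      simp_rw [← hp1]
      simp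
    · simp [if_neg hd]
  have hbound : ∑ u, ∑ y1, ∑ y2,
      ((p (u, y1, y2) * Real.logb 2 (p12 (y1, y2))
          - p (u, y1, y2) * Real.logb 2 (p (u, y1, y2)))
        - (p (u, y1, y2) * Real.logb 2 (q1 y1)
          - p (u, y1, y2) * Real.logb 2 (p1 (u, y1))))
      ≤ ∑ u, ∑ y1, ∑ y2, (if 0 < q1 y1 then
          p1 (u, y1) * p12 (y1, y2) / q1 y1 - p (u, y1, y2) else 0) / Real.log 2 := by
    refine Finset.sum_le_sum fun u _ => Finset.sum_le_sum fun y1 _ =>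
      Finset.sum_le_sum fun y2 _ => ?_
    exact pointB (hp_nn u y1 y2) (hp1_nn u y1) (hp12_nn y1 y2)
      (hp_le_p1 u y1 y2) (hp_le_p12 u y1 y2) (hp1_le_q1 u y1)
  have hzero : ∑ u, ∑ y1, ∑ y2, (if 0 < q1 y1 then
      p1 (u, y1) * p12 (y1, y2) / q1 y1 - p (u, y1, y2) else 0) / Real.log 2 = 0 := by
    simp_rw [← Finset.sum_div]
    rw [tsum, zero_div]
  have hsplit : ∑ u, ∑ y1, ∑ y2,
      ((p (u, y1, y2) * Real.logb 2 (p12 (y1, y2))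
          - p (u, y1, y2) * Real.logb 2 (p (u, y1, y2)))
        - (p (u, y1, y2) * Real.logb 2 (q1 y1)
          - p (u, y1, y2) * Real.logb 2 (p1 (u, y1))))
      = (∑ u, ∑ y1, ∑ y2, (p (u, y1, y2) * Real.logb 2 (p12 (y1, y2))
          - p (u, y1, y2) * Real.logb 2 (p (u, y1, y2))))
      - (∑ u, ∑ y1, ∑ y2, (p (u, y1, y2) * Real.logb 2 (q1 y1)
          - p (u, y1, y2) * Real.logb 2 (p1 (u, y1)))) := by
    simp only [Finset.sum_sub_distrib]
  rw [step1, step2]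
  linarith [hbound, hzero.symm ▸ hbound, hsplit]

end Helpers

/-- With `p(u2, x1, x2) = p(x1) p(u2, x2)` and `(Y1, Y2)` the output of a
weak-interference DMZIC with input `(X1, X2)`,
`I(U2, X1; Y1) - I(U2; Y2) ≤ I(X1; Y1 | U2)`. -/
theorem weak_DMZIC_extreme_point_ineq {U : Type} [Fintype U] [DecidableEq U] {A1 A2 B1 B2 : Type} [Fintype A1] [DecidableEq A1] [Fintype A2] [DecidableEq A2]
    [Fintype B1] [DecidableEq B1] [Fintype B2] [DecidableEq B2]
    (W : A1 → A2 → B1 × B2 → ℝ) (hW : IsChannel W) (hweak : WeakZ W)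
    (p1 : A1 → ℝ) (pU2 : U × A2 → ℝ) (hp1 : IsPMF p1) (hpU2 : IsPMF pU2) :
    let μ : U × A1 × A2 × B1 × B2 → ℝ :=
      fun z => p1 z.2.1 * pU2 (z.1, z.2.2.1) * W z.2.1 z.2.2.1 (z.2.2.2.1, z.2.2.2.2)
    MI μ (fun z => (z.1, z.2.1)) (fun z => z.2.2.2.1)
        - MI μ (fun z => z.1) (fun z => z.2.2.2.2)
      ≤ CMI μ (fun z => z.2.1) (fun z => z.2.2.2.1) (fun z => z.1) := by
  classical
  obtain ⟨p2c, qc, hp2c, hqc, hWeq⟩ := hweak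
  intro μ
  have hμdef : μ = fun z : U × A1 × A2 × B1 × B2 =>
      p1 z.2.1 * pU2 (z.1, z.2.2.1) * W z.2.1 z.2.2.1 (z.2.2.2.1, z.2.2.2.2) := rfl
  -- the factor functions for the (U, Y1, Y2) joint distribution
  set f : U → B2 → ℝ := fun u y2 => ∑ x2, pU2 (u, x2) * p2c x2 y2 with hfdef
  set g : B1 → B2 → ℝ := fun y1 y2 => ∑ x1, p1 x1 * qc x1 y2 y1 with hgdef
  have hf : ∀ u y2, 0 ≤ f u y2 := fun u y2 =>
    Finset.sum_nonneg fun x2 _ => mul_nonneg (hpU2.1 _) ((hp2c x2).1 _)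
  have hg : ∀ y1 y2, 0 ≤ g y1 y2 := fun y1 y2 =>
    Finset.sum_nonneg fun x1 _ => mul_nonneg (hp1.1 _) ((hqc x1 y2).1 _)
  have hfac : ∀ u y1 y2,
      distOf μ (fun z => (z.1, z.2.2.2.1, z.2.2.2.2)) (u, y1, y2) = f u y2 * g y1 y2 := by
    intro u y1 y2
    rw [hμdef, hfdef, hgdef]
    unfold distOf
    rw [Fintype.sum_prod_type]
    simp only [Fintype.sum_prod_type, Prod.mk.injEq, ite_and]
    have collapse : ∀ (a : U) (x1 : A1) (x2 : A2),
        (∑ b1 : B1, ∑ b2 : B2, if a = u then (if b1 = y1 then (if b2 = y2 then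
            p1 x1 * pU2 (a, x2) * W x1 x2 (b1, b2) else 0) else 0) else 0)
          = if a = u then p1 x1 * pU2 (a, x2) * W x1 x2 (y1, y2) else 0 := by
      intro a x1 x2
      by_cases h : a = u
      · subst h
        simp only [if_pos rfl]
        have inner : ∀ b1 : B1, (∑ b2 : B2, if b1 = y1 then (if b2 = y2 then
            p1 x1 * pU2 (a, x2) * W x1 x2 (b1, b2) else 0) else 0)
            = if b1 = y1 then p1 x1 * pU2 (a, x2) * W x1 x2 (b1, y2) else 0 := by
          intro b1
          by_cases h1 : b1 = y1
          · simp only [if_pos h1, Finset.sum_ite_eq', Finset.mem_univ, if_true]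
          · simp [h1]
        simp only [inner, Finset.sum_ite_eq', Finset.mem_univ, if_true]
      · simp [h]
    simp only [collapse]
    have pull : ∀ a : U, (∑ x1 : A1, ∑ x2 : A2,
        if a = u then p1 x1 * pU2 (a, x2) * W x1 x2 (y1, y2) else 0)
        = if a = u then (∑ x1 : A1, ∑ x2 : A2,
            p1 x1 * pU2 (a, x2) * W x1 x2 (y1, y2)) else 0 := by
      intro a
      by_cases h : a = u <;> simp [h]
    simp only [pull, Finset.sum_ite_eq', Finset.mem_univ, if_true]
    rw [Finset.sum_mul_sum]
    rw [Finset.sum_comm]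
    refine Finset.sum_congr rfl fun x1 _ => Finset.sum_congr rfl fun x2 _ => ?_
    rw [hWeq]
    ring
  -- marginals
  have hp2m : ∀ u y2, distOf μ (fun z => (z.1, z.2.2.2.2)) (u, y2)
      = ∑ y1, distOf μ (fun z => (z.1, z.2.2.2.1, z.2.2.2.2)) (u, y1, y2) :=
    fun u y2 => distOf_marg_mid μ (fun z => z.1) (fun z => z.2.2.2.1)
      (fun z => z.2.2.2.2) u y2
  have hp1m : ∀ u y1, distOf μ (fun z => (z.1, z.2.2.2.1)) (u, y1)
      = ∑ y2, distOf μ (fun z => (z.1, z.2.2.2.1, z.2.2.2.2)) (u, y1, y2) :=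
    fun u y1 => distOf_marg_last μ (fun z => z.1) (fun z => z.2.2.2.1)
      (fun z => z.2.2.2.2) u y1
  have hp12m : ∀ y1 y2, distOf μ (fun z => (z.2.2.2.1, z.2.2.2.2)) (y1, y2)
      = ∑ u, distOf μ (fun z => (z.1, z.2.2.2.1, z.2.2.2.2)) (u, y1, y2) :=
    fun y1 y2 => distOf_marg_fst μ (fun z => z.1) (fun z => z.2.2.2.1)
      (fun z => z.2.2.2.2) y1 y2
  have hq1m : ∀ y1, distOf μ (fun z => z.2.2.2.1) y1
      = ∑ u, ∑ y2, distOf μ (fun z => (z.1, z.2.2.2.1, z.2.2.2.2)) (u, y1, y2) := by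
    intro y1
    rw [distOf_marg_pair_fst μ (fun z => z.1) (fun z => z.2.2.2.1) y1]
    exact Finset.sum_congr rfl fun u _ => hp1m u y1
  have hq2m : ∀ y2, distOf μ (fun z => z.2.2.2.2) y2
      = ∑ u, ∑ y1, distOf μ (fun z => (z.1, z.2.2.2.1, z.2.2.2.2)) (u, y1, y2) := by
    intro y2
    rw [distOf_marg_pair_fst μ (fun z => z.1) (fun z => z.2.2.2.2) y2]
    exact Finset.sum_congr rfl fun u _ => hp2m u y2
  -- the key inequality  H(U,Y2) - H(Y2) ≤ H(U,Y1) - H(Y1)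
  have key : H μ (fun z => (z.1, z.2.2.2.2)) - H μ (fun z => z.2.2.2.2)
      ≤ H μ (fun z => (z.1, z.2.2.2.1)) - H μ (fun z => z.2.2.2.1) :=
    core (distOf μ (fun z => (z.1, z.2.2.2.1, z.2.2.2.2)))
      (distOf μ (fun z => (z.1, z.2.2.2.2))) (distOf μ (fun z => (z.1, z.2.2.2.1)))
      (distOf μ (fun z => (z.2.2.2.1, z.2.2.2.2))) (distOf μ (fun z => z.2.2.2.1))
      (distOf μ (fun z => z.2.2.2.2)) f g hf hg hfac hp2m hp1m hp12m hq1m hq2m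
  -- identification of entropies of reordered tuples
  have hswap1 : H μ (fun z => (z.2.1, z.1)) = H μ (fun z => (z.1, z.2.1)) :=
    H_comp μ (fun z => (z.1, z.2.1)) (fun t => (t.2, t.1))
      (fun a b h => by
        obtain ⟨a1, a2⟩ := a; obtain ⟨b1, b2⟩ := b
        simp only [Prod.mk.injEq] at h ⊢
        exact ⟨h.2, h.1⟩)
  have hswap2 : H μ (fun z => (z.2.2.2.1, z.1)) = H μ (fun z => (z.1, z.2.2.2.1)) :=
    H_comp μ (fun z => (z.1, z.2.2.2.1)) (fun t => (t.2, t.1))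
      (fun a b h => by
        obtain ⟨a1, a2⟩ := a; obtain ⟨b1, b2⟩ := b
        simp only [Prod.mk.injEq] at h ⊢
        exact ⟨h.2, h.1⟩)
  have hassoc : H μ (fun z => (z.2.1, z.2.2.2.1, z.1)) = H μ (fun z => ((z.1, z.2.1), z.2.2.2.1)) :=
    H_comp μ (fun z => ((z.1, z.2.1), z.2.2.2.1)) (fun t => (t.1.2, t.2, t.1.1))
      (fun a b h => by
        obtain ⟨⟨a1, a2⟩, a3⟩ := a; obtain ⟨⟨b1, b2⟩, b3⟩ := b
        simp only [Prod.mk.injEq] at h ⊢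
        exact ⟨⟨h.2.2, h.1⟩, h.2.1⟩)
  simp only [MI, CMI]
  linarith [key, hswap1, hswap2, hassoc]

end IT
end
end

section
/- For a DMZIC with weak interference with transition probability p(y1,y2|x1,x2) = p(y2|x2) q(y1|x1,y2), consider the modified interference channel with the same inputs (X1,X2), the same receiver-1 output Y1, and receiver-2 output Y2' = (X1,Y2) taking values in X1 x Y2, with transition probability induced by the original channel. Then the modified channel is degraded (the Markov chain (X1,X2) - Y2' - Y1 holds), and the modified channel has exactly the same capacity region as the original DMZIC. -/
open scoped BigOperators

noncomputable section

namespace IT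

/-- The modified channel: same inputs, same receiver-1 output `Y1`, and receiver-2
output `Y2' = (X1, Y2)`. -/
def modZ {A1 A2 B1 B2 : Type} [DecidableEq A1] (W : A1 → A2 → B1 × B2 → ℝ) :
    A1 → A2 → B1 × (A1 × B2) → ℝ :=
  fun x1 x2 y => if y.2.1 = x1 then W x1 x2 (y.1, y.2.2) else 0

section Aux

variable {A1 A2 B1 B2 : Type} [Fintype A1] [DecidableEq A1] [Fintype A2] [DecidableEq A2]
    [Fintype B1] [DecidableEq B1] [Fintype B2] [DecidableEq B2]

lemma nFold_modZ (W : A1 → A2 → B1 × B2 → ℝ) {n : ℕ} (a : Fin n → A1) (b : Fin n → A2)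
    (y1 : Fin n → B1) (u : Fin n → A1) (z : Fin n → B2) :
    nFold (modZ W) n a b (y1, fun i => (u i, z i)) =
      if u = a then nFold W n a b (y1, z) else 0 := by
  by_cases h : u = a
  · subst h
    simp [nFold, modZ]
  · rw [if_neg h]
    obtain ⟨i, hi⟩ : ∃ i, u i ≠ a i := by
      by_contra hc; push_neg at hc; exact h (funext hc)
    exact Finset.prod_eq_zero (Finset.mem_univ i) (by simp [modZ, hi])

lemma sum_modZ_if (W : A1 → A2 → B1 × B2 → ℝ) {n : ℕ} (a : Fin n → A1) (b : Fin n → A2)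
    (y1 : Fin n → B1) (P : (Fin n → A1 × B2) → Prop) [DecidablePred P] :
    ∑ y2' : Fin n → A1 × B2, (if P y2' then nFold (modZ W) n a b (y1, y2') else 0)
      = ∑ z : Fin n → B2, (if P (fun i => (a i, z i)) then nFold W n a b (y1, z) else 0) := by
  have key : ∀ u : Fin n → A1,
      (∑ z : Fin n → B2, if P (fun i => (u i, z i)) then
          nFold (modZ W) n a b (y1, fun i => (u i, z i)) else 0)
      = if u = a then
          ∑ z : Fin n → B2, (if P (fun i => (a i, z i)) then nFold W n a b (y1, z) else 0)
        else 0 := by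
    intro u
    by_cases h : u = a
    · subst h
      rw [if_pos rfl]
      refine Finset.sum_congr rfl fun z _ => ?_
      rw [nFold_modZ]
      simp
    · rw [if_neg h]
      refine Finset.sum_eq_zero fun z _ => ?_
      rw [nFold_modZ, if_neg h]
      simp
  calc ∑ y2' : Fin n → A1 × B2, (if P y2' then nFold (modZ W) n a b (y1, y2') else 0)
      = ∑ p : (Fin n → A1) × (Fin n → B2),
          (if P (fun i => (p.1 i, p.2 i)) then
            nFold (modZ W) n a b (y1, fun i => (p.1 i, p.2 i)) else 0) := by
        rw [← Equiv.sum_comp (Equiv.arrowProdEquivProdArrow (Fin n) (fun _ => A1) (fun _ => B2)).symm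
          (fun y2' => if P y2' then nFold (modZ W) n a b (y1, y2') else 0)]
        rfl
    _ = ∑ u : Fin n → A1, ∑ z : Fin n → B2,
          (if P (fun i => (u i, z i)) then
            nFold (modZ W) n a b (y1, fun i => (u i, z i)) else 0) :=
        Fintype.sum_prod_type _
    _ = ∑ u : Fin n → A1, if u = a then
          (∑ z : Fin n → B2, (if P (fun i => (a i, z i)) then nFold W n a b (y1, z) else 0))
        else 0 := Finset.sum_congr rfl fun u _ => key u
    _ = _ := by rw [Finset.sum_ite_eq' Finset.univ a]; simp

lemma errsum_eq (W : A1 → A2 → B1 × B2 → ℝ) {n : ℕ} (a : Fin n → A1) (b : Fin n → A2)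
    (P : (Fin n → B1) → (Fin n → A1 × B2) → Prop) [∀ y1, DecidablePred (P y1)] :
    ∑ y : (Fin n → B1) × (Fin n → A1 × B2), (if P y.1 y.2 then nFold (modZ W) n a b y else 0)
      = ∑ y : (Fin n → B1) × (Fin n → B2),
          (if P y.1 (fun i => (a i, y.2 i)) then nFold W n a b y else 0) := by
  rw [Fintype.sum_prod_type, Fintype.sum_prod_type]
  exact Finset.sum_congr rfl fun y1 _ => sum_modZ_if W a b y1 (P y1)

lemma sum_y1_nFold (W : A1 → A2 → B1 × B2 → ℝ) (p2 : A2 → B2 → ℝ) (q : A1 → B2 → B1 → ℝ)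
    (hq : ∀ x1 y2, IsPMF (q x1 y2))
    (hfac : ∀ x1 x2 y1 y2, W x1 x2 (y1, y2) = p2 x2 y2 * q x1 y2 y1)
    {n : ℕ} (a : Fin n → A1) (b : Fin n → A2) (z : Fin n → B2) :
    ∑ y1 : Fin n → B1, nFold W n a b (y1, z) = ∏ i, p2 (b i) (z i) := by
  rw [show (∑ y1 : Fin n → B1, nFold W n a b (y1, z))
      = ∑ y1 : Fin n → B1, ∏ i, (fun i (v : B1) => W (a i) (b i) (v, z i)) i (y1 i) from rfl]
  rw [← Fintype.prod_sum (fun i (v : B1) => W (a i) (b i) (v, z i))]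
  refine Finset.prod_congr rfl fun i _ => ?_
  simp only [hfac]
  rw [← Finset.mul_sum, (hq (a i) (z i)).2, mul_one]

lemma sum_err2_term (W : A1 → A2 → B1 × B2 → ℝ) (p2 : A2 → B2 → ℝ) (q : A1 → B2 → B1 → ℝ)
    (hq : ∀ x1 y2, IsPMF (q x1 y2))
    (hfac : ∀ x1 x2 y1 y2, W x1 x2 (y1, y2) = p2 x2 y2 * q x1 y2 y1)
    {n : ℕ} (a : Fin n → A1) (b : Fin n → A2)
    (P : (Fin n → B2) → Prop) [DecidablePred P] :
    ∑ y : (Fin n → B1) × (Fin n → B2), (if P y.2 then nFold W n a b y else 0)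
      = ∑ z : Fin n → B2, (if P z then ∏ i, p2 (b i) (z i) else 0) := by
  rw [Fintype.sum_prod_type_right]
  refine Finset.sum_congr rfl fun z _ => ?_
  by_cases h : P z
  · simp only [if_pos h]
    exact sum_y1_nFold W p2 q hq hfac a b z
  · simp [if_neg h]

/-- The code for the modified channel induced by a code for the original channel. -/
def modCode {n M1 M2 : ℕ} (c : Code A1 A2 B1 B2 n M1 M2) : Code A1 A2 B1 (A1 × B2) n M1 M2 :=
  ⟨c.enc1, c.enc2, c.dec1, fun y2' => c.dec2 (fun i => (y2' i).2)⟩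

lemma err1_modCode (W : A1 → A2 → B1 × B2 → ℝ) {n M1 M2 : ℕ} (c : Code A1 A2 B1 B2 n M1 M2) :
    err1 (modZ W) (modCode c) = err1 W c := by
  unfold err1
  congr 1
  refine Finset.sum_congr rfl fun w1 _ => Finset.sum_congr rfl fun w2 _ => ?_
  exact errsum_eq W (c.enc1 w1) (c.enc2 w2) (fun y1 _ => c.dec1 y1 ≠ w1)

lemma err2_modCode (W : A1 → A2 → B1 × B2 → ℝ) {n M1 M2 : ℕ} (c : Code A1 A2 B1 B2 n M1 M2) :
    err2 (modZ W) (modCode c) = err2 W c := by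
  unfold err2
  congr 1
  refine Finset.sum_congr rfl fun w1 _ => Finset.sum_congr rfl fun w2 _ => ?_
  exact errsum_eq W (c.enc1 w1) (c.enc2 w2)
    (fun _ y2' => c.dec2 (fun i => (y2' i).2) ≠ w2)

end Aux


/-- For a DMZIC with weak interference, the modified channel with
receiver-2 output `Y2' = (X1, Y2)` is degraded (`(X1,X2) - Y2' - Y1` holds), and it has
exactly the same capacity region as the original channel. -/
theorem modZ_degraded_and_capacity_eq {A1 A2 B1 B2 : Type} [Fintype A1] [DecidableEq A1] [Fintype A2] [DecidableEq A2]
    [Fintype B1] [DecidableEq B1] [Fintype B2] [DecidableEq B2]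
    (W : A1 → A2 → B1 × B2 → ℝ) (hW : IsChannel W) (hweak : WeakZ W) :
    (∃ r : A1 × B2 → B1 → ℝ, (∀ y2', IsPMF (r y2')) ∧
        ∀ x1 x2 y1 y2', modZ W x1 x2 (y1, y2')
          = (∑ y1', modZ W x1 x2 (y1', y2')) * r y2' y1) ∧
      capacityRegion W = capacityRegion (modZ W) := by
  obtain ⟨p2, q, hp2, hq, hfac⟩ := hweak
  constructor
  · -- degradedness
    refine ⟨fun y2' y1 => q y2'.1 y2'.2 y1, fun y2' => hq y2'.1 y2'.2, ?_⟩
    rintro x1 x2 y1 ⟨a, y2⟩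
    by_cases h : a = x1
    · subst h
      have hl : ∀ v : B1, modZ W a x2 (v, (a, y2)) = p2 x2 y2 * q a y2 v := by
        intro v; simp [modZ, hfac]
      simp only [hl]
      rw [← Finset.mul_sum, (hq a y2).2, mul_one]
    · simp [modZ, h]
  · -- capacity regions agree
    have hach : ∀ R1 R2 : ℝ, Achievable W R1 R2 ↔ Achievable (modZ W) R1 R2 := by
      intro R1 R2
      constructor
      · rintro ⟨h1, h2, h3⟩
        refine ⟨h1, h2, fun ε hε => ?_⟩
        obtain ⟨n, M1, M2, c, hn, hM1, hM2, he1, he2⟩ := h3 ε hε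
        exact ⟨n, M1, M2, modCode c, hn, hM1, hM2,
          by rw [err1_modCode]; exact he1, by rw [err2_modCode]; exact he2⟩
      · rintro ⟨h1, h2, h3⟩
        refine ⟨h1, h2, fun ε hε => ?_⟩
        obtain ⟨n, M1, M2, c', hn, hM1, hM2, he1, he2⟩ := h3 ε hε
        have hM1pos : 0 < M1 := by
          have : (0 : ℝ) < (M1 : ℝ) := lt_of_lt_of_le (by positivity) hM1
          exact_mod_cast this
        -- the per-`w1` error probability of receiver 2 given side information `enc1 w1`
        set S : Fin M1 → ℝ := fun w => ∑ w2 : Fin M2, ∑ z : Fin n → B2,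
          (if c'.dec2 (fun i => (c'.enc1 w i, z i)) ≠ w2 then
            ∏ i, p2 (c'.enc2 w2 i) (z i) else 0) with hS
        obtain ⟨wstar, -, hwstar⟩ :=
          Finset.exists_min_image Finset.univ S ⟨⟨0, hM1pos⟩, Finset.mem_univ _⟩
        set c : Code A1 A2 B1 B2 n M1 M2 :=
          ⟨c'.enc1, c'.enc2, c'.dec1, fun z => c'.dec2 (fun i => (c'.enc1 wstar i, z i))⟩
          with hc
        have herr1 : err1 W c = err1 (modZ W) c' := by
          unfold err1
          congr 1
          refine Finset.sum_congr rfl fun w1 _ => Finset.sum_congr rfl fun w2 _ => ?_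
          exact (errsum_eq W (c'.enc1 w1) (c'.enc2 w2) (fun y1 _ => c'.dec1 y1 ≠ w1)).symm
        have herr2' : err2 (modZ W) c' = ((M1 : ℝ) * (M2 : ℝ))⁻¹ * ∑ w1 : Fin M1, S w1 := by
          unfold err2
          congr 1
          refine Finset.sum_congr rfl fun w1 _ => ?_
          rw [hS]
          refine Finset.sum_congr rfl fun w2 _ => ?_
          rw [errsum_eq W (c'.enc1 w1) (c'.enc2 w2) (fun _ y2' => c'.dec2 y2' ≠ w2)]
          exact sum_err2_term W p2 q hq hfac (c'.enc1 w1) (c'.enc2 w2)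
            (fun z => c'.dec2 (fun i => (c'.enc1 w1 i, z i)) ≠ w2)
        have herr2c : err2 W c = ((M1 : ℝ) * (M2 : ℝ))⁻¹ * ∑ _w1 : Fin M1, S wstar := by
          unfold err2
          congr 1
          refine Finset.sum_congr rfl fun w1 _ => ?_
          rw [hS]
          refine Finset.sum_congr rfl fun w2 _ => ?_
          exact sum_err2_term W p2 q hq hfac (c'.enc1 w1) (c'.enc2 w2)
            (fun z => c'.dec2 (fun i => (c'.enc1 wstar i, z i)) ≠ w2)
        have hle : err2 W c ≤ err2 (modZ W) c' := by
          rw [herr2c, herr2']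
          refine mul_le_mul_of_nonneg_left ?_ (by positivity)
          exact Finset.sum_le_sum fun w1 _ => hwstar w1 (Finset.mem_univ w1)
        exact ⟨n, M1, M2, c, hn, hM1, hM2, herr1 ▸ he1, le_trans hle he2⟩
    have hset : {p : ℝ × ℝ | Achievable W p.1 p.2}
        = {p : ℝ × ℝ | Achievable (modZ W) p.1 p.2} :=
      Set.ext fun p => hach p.1 p.2
    rw [capacityRegion, capacityRegion, hset]

end IT
end
end

section
/- Consider the binary channel with inputs X1, X2 in {0,1} and outputs Y2 = X2 XOR Z and Y1 = X1 XOR Y2, where Z is Bernoulli(epsilon) and independent of (X1,X2). Then the maximum over all independent binary inputs X1, X2 of I(X1;Y1) + I(X2;Y2) equals 1 - h2(epsilon), and this maximum is attained by any product input distribution making H(Y1) = 1 (e.g., X1 uniform). -/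
open scoped BigOperators

noncomputable section

namespace IT

/-- Bernoulli pmf on `Bool`: `P(true) = ε`. -/
def bern (ε : ℝ) : Bool → ℝ := fun b => if b then ε else 1 - ε

/-- Joint pmf of `(X1, X2, Z)` with `X1 ~ p1`, `X2 ~ p2`, `Z ~ Bern(ε)` independent. -/
def muXor (ε : ℝ) (p1 p2 : Bool → ℝ) : Bool × Bool × Bool → ℝ :=
  fun z => p1 z.1 * p2 z.2.1 * bern ε z.2.2

lemma h2_le_one (t : ℝ) : h2 t ≤ 1 := by
  have hb := Real.binEntropy_le_log_two (p := t)
  have hl : (0:ℝ) < Real.log 2 := Real.log_pos one_lt_two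
  have : h2 t = Real.binEntropy t / Real.log 2 := by
    unfold h2 Real.binEntropy Real.logb
    rw [Real.log_inv, Real.log_inv]; ring
  rw [this, div_le_one hl]; exact hb

lemma mul_logb_mul (x y : ℝ) (hx : 0 ≤ x) (hy : 0 ≤ y) :
    x * y * Real.logb 2 (x * y) = x * y * Real.logb 2 x + x * y * Real.logb 2 y := by
  rcases hx.eq_or_lt with h | h
  · simp [← h]
  rcases hy.eq_or_lt with h' | h'
  · simp [← h']
  rw [Real.logb_mul h.ne' h'.ne']; ring

lemma ent_xor_prod (u v : Bool → ℝ) (hu : ∀ b, 0 ≤ u b) (hv : ∀ b, 0 ≤ v b)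
    (hus : u true + u false = 1) (hvs : v true + v false = 1) :
    ent (fun p : Bool × Bool => u p.1 * v (xor p.1 p.2)) = ent u + ent v := by
  have expand : ent (fun p : Bool × Bool => u p.1 * v (xor p.1 p.2)) =
      -(u true * v true * Real.logb 2 (u true * v true)
        + u true * v false * Real.logb 2 (u true * v false)
        + u false * v true * Real.logb 2 (u false * v true)
        + u false * v false * Real.logb 2 (u false * v false)) := by
    simp [ent, Fintype.sum_prod_type]; ring
  rw [expand, mul_logb_mul _ _ (hu true) (hv true), mul_logb_mul _ _ (hu true) (hv false),
    mul_logb_mul _ _ (hu false) (hv true), mul_logb_mul _ _ (hu false) (hv false)]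
  simp only [ent, Fintype.sum_bool]
  linear_combination (-(u true * Real.logb 2 (u true)) - u false * Real.logb 2 (u false)) * hvs
    + (-(v true * Real.logb 2 (v true)) - v false * Real.logb 2 (v false)) * hus

lemma ent_bool_eq_h2 (d : Bool → ℝ) (hs : d true + d false = 1) : ent d = h2 (d true) := by
  have hf : d false = 1 - d true := by linarith
  simp [ent, Fintype.sum_bool, h2, hf]; ring

lemma key (ε : ℝ) (hε0 : 0 ≤ ε) (hε1 : ε ≤ 1) (p1 p2 : Bool → ℝ)
    (h1 : IsPMF p1) (hp2 : IsPMF p2) :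
    MI (muXor ε p1 p2) (fun z => z.1) (fun z => xor z.1 (xor z.2.1 z.2.2))
      + MI (muXor ε p1 p2) (fun z => z.2.1) (fun z => xor z.2.1 z.2.2)
    = H (muXor ε p1 p2) (fun z => xor z.1 (xor z.2.1 z.2.2)) - h2 ε := by
  obtain ⟨h1n, h1s⟩ := h1
  obtain ⟨h2n, h2s⟩ := hp2
  rw [Fintype.sum_bool] at h1s h2s
  have hbn : ∀ b, 0 ≤ bern ε b := by intro b; cases b <;> simp [bern] <;> linarith
  set w : Bool → ℝ := fun c => p2 true * bern ε (!c) + p2 false * bern ε c with hw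
  have hwn : ∀ b, 0 ≤ w b := fun b =>
    add_nonneg (mul_nonneg (h2n true) (hbn _)) (mul_nonneg (h2n false) (hbn _))
  have hws : w true + w false = 1 := by
    simp only [hw, bern]; simp; linear_combination h2s
  have hbs : bern ε true + bern ε false = 1 := by simp [bern]
  have hX1 : distOf (muXor ε p1 p2) (fun z : Bool × Bool × Bool => z.1) = p1 := by
    funext a; cases a
    · simp [distOf, muXor, bern, Fintype.sum_prod_type]
      linear_combination p1 false * h2s
    · simp [distOf, muXor, bern, Fintype.sum_prod_type]
      linear_combination p1 true * h2s
  have hX2 : distOf (muXor ε p1 p2) (fun z : Bool × Bool × Bool => z.2.1) = p2 := by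
    funext a; cases a
    · simp [distOf, muXor, bern, Fintype.sum_prod_type]
      linear_combination p2 false * h1s
    · simp [distOf, muXor, bern, Fintype.sum_prod_type]
      linear_combination p2 true * h1s
  have hY2 : distOf (muXor ε p1 p2) (fun z : Bool × Bool × Bool => xor z.2.1 z.2.2) = w := by
    funext c; cases c
    · simp [distOf, muXor, bern, hw, Fintype.sum_prod_type]
      linear_combination (p2 true * ε + p2 false * (1 - ε)) * h1s
    · simp [distOf, muXor, bern, hw, Fintype.sum_prod_type]
      linear_combination (p2 true * (1 - ε) + p2 false * ε) * h1s
  have hX1Y1 : distOf (muXor ε p1 p2)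
      (fun z : Bool × Bool × Bool => (z.1, xor z.1 (xor z.2.1 z.2.2)))
      = fun p : Bool × Bool => p1 p.1 * w (xor p.1 p.2) := by
    funext p; obtain ⟨a, c⟩ := p
    cases a <;> cases c <;>
      (simp [distOf, muXor, bern, hw, Fintype.sum_prod_type]; ring)
  have hX2Y2 : distOf (muXor ε p1 p2)
      (fun z : Bool × Bool × Bool => (z.2.1, xor z.2.1 z.2.2))
      = fun p : Bool × Bool => p2 p.1 * bern ε (xor p.1 p.2) := by
    funext p; obtain ⟨a, c⟩ := p
    cases a <;> cases c
    · simp [distOf, muXor, bern, Fintype.sum_prod_type]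
      linear_combination (p2 false * (1 - ε)) * h1s
    · simp [distOf, muXor, bern, Fintype.sum_prod_type]
      linear_combination (p2 false * ε) * h1s
    · simp [distOf, muXor, bern, Fintype.sum_prod_type]
      linear_combination (p2 true * ε) * h1s
    · simp [distOf, muXor, bern, Fintype.sum_prod_type]
      linear_combination (p2 true * (1 - ε)) * h1s
  have hentb : ent (bern ε) = h2 ε := by
    simp [ent, bern, h2, Fintype.sum_bool]; ring
  unfold MI H
  rw [hX1, hX2, hY2, hX1Y1, hX2Y2,
    ent_xor_prod p1 w h1n hwn h1s hws,
    ent_xor_prod p2 (bern ε) h2n hbn h2s hbs, hentb]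
  ring

lemma HY1_le_one (ε : ℝ) (p1 p2 : Bool → ℝ) (h1 : IsPMF p1) (hp2 : IsPMF p2) :
    H (muXor ε p1 p2) (fun z => xor z.1 (xor z.2.1 z.2.2)) ≤ 1 := by
  obtain ⟨h1n, h1s⟩ := h1
  obtain ⟨h2n, h2s⟩ := hp2
  rw [Fintype.sum_bool] at h1s h2s
  set d := distOf (muXor ε p1 p2) (fun z : Bool × Bool × Bool => xor z.1 (xor z.2.1 z.2.2)) with hd
  have hds : d true + d false = 1 := by
    simp [hd, distOf, muXor, bern, Fintype.sum_prod_type]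
    linear_combination (p2 true + p2 false) * h1s + h2s
  calc H (muXor ε p1 p2) (fun z => xor z.1 (xor z.2.1 z.2.2)) = h2 (d true) :=
        ent_bool_eq_h2 d hds
    _ ≤ 1 := h2_le_one _

lemma HY1_uniform (ε : ℝ) (p2 : Bool → ℝ) (hp2 : IsPMF p2) :
    H (muXor ε (fun _ => (2 : ℝ)⁻¹) p2) (fun z => xor z.1 (xor z.2.1 z.2.2)) = 1 := by
  obtain ⟨h2n, h2s⟩ := hp2
  rw [Fintype.sum_bool] at h2s
  have hU : distOf (muXor ε (fun _ => (2 : ℝ)⁻¹) p2)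
      (fun z : Bool × Bool × Bool => xor z.1 (xor z.2.1 z.2.2)) = fun _ => (2 : ℝ)⁻¹ := by
    funext c; cases c
    · simp [distOf, muXor, bern, Fintype.sum_prod_type]
      linear_combination (2 : ℝ)⁻¹ * h2s
    · simp [distOf, muXor, bern, Fintype.sum_prod_type]
      linear_combination (2 : ℝ)⁻¹ * h2s
  rw [H, hU]
  have : ent (fun _ : Bool => (2 : ℝ)⁻¹) = Real.logb 2 2 := by
    simp [ent, Fintype.sum_bool, Real.logb_inv]
  rw [this, Real.logb_self_eq_one] <;> norm_num


/-- For the channel `Y2 = X2 ⊕ Z`, `Y1 = X1 ⊕ Y2` with `Z ~ Bern(ε)`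
independent of the inputs: the maximum of `I(X1;Y1) + I(X2;Y2)` over independent binary
inputs equals `1 - h2(ε)`, it is attained exactly when `H(Y1) = 1`, e.g. for `X1` uniform. -/
theorem binary_xor_sum_MI_max (ε : ℝ) (hε : ε ∈ Set.Icc (0 : ℝ) 1) :
    IsGreatest
      {v : ℝ | ∃ p1 p2 : Bool → ℝ, IsPMF p1 ∧ IsPMF p2 ∧
        v = MI (muXor ε p1 p2) (fun z => z.1) (fun z => xor z.1 (xor z.2.1 z.2.2))
          + MI (muXor ε p1 p2) (fun z => z.2.1) (fun z => xor z.2.1 z.2.2)}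
      (1 - h2 ε)
    ∧ (∀ p1 p2 : Bool → ℝ, IsPMF p1 → IsPMF p2 →
        H (muXor ε p1 p2) (fun z => xor z.1 (xor z.2.1 z.2.2)) = 1 →
        MI (muXor ε p1 p2) (fun z => z.1) (fun z => xor z.1 (xor z.2.1 z.2.2))
          + MI (muXor ε p1 p2) (fun z => z.2.1) (fun z => xor z.2.1 z.2.2) = 1 - h2 ε)
    ∧ (∀ p2 : Bool → ℝ, IsPMF p2 →
        H (muXor ε (fun _ => (2 : ℝ)⁻¹) p2) (fun z => xor z.1 (xor z.2.1 z.2.2)) = 1) := by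
  obtain ⟨hε0, hε1⟩ := hε
  have huni : IsPMF (fun _ : Bool => (2 : ℝ)⁻¹) :=
    ⟨fun _ => by norm_num, by rw [Fintype.sum_bool]; norm_num⟩
  refine ⟨⟨⟨fun _ => (2 : ℝ)⁻¹, fun _ => (2 : ℝ)⁻¹, huni, huni, ?_⟩, ?_⟩, ?_, ?_⟩
  · rw [key ε hε0 hε1 _ _ huni huni, HY1_uniform ε _ huni]
  · rintro v ⟨p1, p2, hp1, hp2, rfl⟩
    rw [key ε hε0 hε1 _ _ hp1 hp2]
    have := HY1_le_one ε p1 p2 hp1 hp2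
    linarith
  · intro p1 p2 hp1 hp2 hH
    rw [key ε hε0 hε1 _ _ hp1 hp2, hH]
  · intro p2 hp2
    exact HY1_uniform ε p2 hp2


end IT
end
end
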